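/- Let m ≥ 1, l ∈ ℕ, and let (c_a) be real coefficients indexed by multi-indices a ∈ ℕ^m with a₁+⋯+a_m = l satisfying ∑_a c_a² ≤ 1. Define p(y) = ∑_{a: a₁+⋯+a_m = l} c_a · He_a(y) / √(l!). Then for every y ∈ ℝ^m and every u ∈ (0,1): p(y)² ≤ u^{−l} · (1 − u²)^{−m/2} · exp(u·‖y‖₂² / (1 + u)). -/

import Mathlib

open scoped BigOperators

/-- Probabilists' Hermite polynomials: `He 0 = 1`, `He 1 = id`,
`He (a+1) x = x * He a x - a * He (a-1) x`. -/
noncomputable def He : ℕ → ℝ → ℝ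
  | 0, _ => 1
  | 1, x => x
  | (n + 2), x => x * He (n + 1) x - ((n : ℝ) + 1) * He n x

open Polynomial in
noncomputable def heP : ℕ → Polynomial ℝ
  | 0 => 1
  | 1 => X
  | (n + 2) => X * heP (n + 1) - Polynomial.C ((n : ℝ) + 1) * heP n

open Polynomial

lemma heP_zero : heP 0 = 1 := rfl
lemma heP_one : heP 1 = X := rfl
lemma heP_add_two (n : ℕ) :
    heP (n + 2) = X * heP (n + 1) - C ((n : ℝ) + 1) * heP n := by rw [heP]

lemma heP_eval (n : ℕ) (x : ℝ) : (heP n).eval x = He n x := by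
  induction n using Nat.strong_induction_on with
  | _ n ih =>
    match n with
    | 0 => simp [heP_zero, He]
    | 1 => simp [heP_one, He]
    | (k + 2) =>
      rw [heP_add_two, He]
      simp [ih (k+1) (by omega), ih k (by omega)]

lemma heP_derivative (n : ℕ) :
    derivative (heP n) = C (n : ℝ) * heP (n - 1) := by
  induction n using Nat.strong_induction_on with
  | _ n ih =>
    match n with
    | 0 => simp [heP_zero]
    | 1 => simp [heP_one, heP_zero]
    | (k + 2) =>
      rw [heP_add_two, derivative_sub, derivative_mul, derivative_mul, derivative_X,
        derivative_C, ih (k+1) (by omega), ih k (by omega)]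
      match k with
      | 0 =>
        simp only [Nat.cast_zero, map_zero, zero_mul, mul_zero, sub_zero, Nat.sub_self,
          Nat.cast_ofNat, heP_zero, heP_one, Nat.add_sub_cancel]
        push_cast
        simp only [C_add, C_1, map_ofNat, heP_one]
        ring
      | (j + 1) =>
        have h1 : (j + 1 + 1 : ℕ) - 1 = j + 1 := rfl
        have h2 : (j + 1 : ℕ) - 1 = j := rfl
        have h3 : (j + 1 + 2 : ℕ) - 1 = j + 2 := rfl
        rw [h1, h2, h3, heP_add_two]
        push_cast
        simp only [C_add, C_1, map_ofNat]
        ring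
open Polynomial MeasureTheory Real Filter

noncomputable def w (z : ℝ) : ℝ := Real.exp (-z^2/2)

lemma w_eq (z : ℝ) : w z = Real.exp (-(1/2) * z ^ 2 + 0 * z + 0) := by
  unfold w; congr 1; ring

lemma integrable_pow_mul_gauss (i : ℕ) {a : ℝ} (ha : 0 < a) :
    Integrable (fun z : ℝ => z ^ i * Real.exp (-a * z ^ 2)) := by
  have h := integrable_rpow_mul_exp_neg_mul_sq ha (s := (i : ℝ))
    (by have := Nat.cast_nonneg (α := ℝ) i; linarith)
  simpa [Real.rpow_natCast] using h

lemma integrable_poly_gauss0 (P : Polynomial ℝ) {a : ℝ} (ha : 0 < a) :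
    Integrable (fun z : ℝ => P.eval z * Real.exp (-a * z ^ 2)) := by
  have : (fun z : ℝ => P.eval z * Real.exp (-a * z ^ 2))
      = fun z : ℝ => ∑ i ∈ Finset.range (P.natDegree + 1),
          P.coeff i * (z ^ i * Real.exp (-a * z ^ 2)) := by
    funext z
    rw [eval_eq_sum_range, Finset.sum_mul]
    exact Finset.sum_congr rfl fun i _ => by ring
  rw [this]
  exact integrable_finset_sum _ fun i _ =>
    ((integrable_pow_mul_gauss i ha).const_mul _)

lemma integrable_poly_gauss (P : Polynomial ℝ) {a : ℝ} (ha : 0 < a) (b c : ℝ) :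
    Integrable (fun z : ℝ => P.eval z * Real.exp (-a * z ^ 2 + b * z + c)) := by
  set d : ℝ := b / (2 * a) with hd
  have key : ∀ z : ℝ, -a * z ^ 2 + b * z + c
      = -a * (z - d) ^ 2 + (c + b ^ 2 / (4 * a)) := by
    intro z; rw [hd]; field_simp; ring
  have h0 : Integrable (fun z : ℝ =>
      (P.comp (X + C d)).eval z * Real.exp (-a * z ^ 2)
        * Real.exp (c + b ^ 2 / (4 * a))) :=
    (integrable_poly_gauss0 _ ha).mul_const _
  have h1 := h0.comp_sub_right d
  have e : ∀ z : ℝ, (P.comp (X + C d)).eval (z - d) * Real.exp (-a * (z - d) ^ 2)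
        * Real.exp (c + b ^ 2 / (4 * a))
      = P.eval z * Real.exp (-a * z ^ 2 + b * z + c) := by
    intro z
    simp only [eval_comp, eval_add, eval_X, eval_C, sub_add_cancel]
    rw [mul_assoc, ← Real.exp_add, key z]
  exact (funext e : _) ▸ h1

lemma integrable_poly_w (P : Polynomial ℝ) :
    Integrable (fun z : ℝ => P.eval z * w z) := by
  have h := integrable_poly_gauss P (by norm_num : (0:ℝ) < 1/2) 0 0
  simp only [← w_eq] at h
  exact h

lemma tendsto_poly_gauss_atTop (P : Polynomial ℝ) {a : ℝ} (ha : 0 < a) (b c : ℝ) :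
    Tendsto (fun z : ℝ => P.eval z * Real.exp (-a * z ^ 2 + b * z + c))
      atTop (nhds 0) := by
  have hmono : ∀ i : ℕ, Tendsto
      (fun z : ℝ => z ^ i * Real.exp (-a * z ^ 2 + b * z + c)) atTop (nhds 0) := by
    intro i
    have h1 : Tendsto (fun z : ℝ => z ^ i * Real.exp (-z)) atTop (nhds 0) :=
      tendsto_pow_mul_exp_neg_atTop_nhds_zero i
    have h2 : Tendsto (fun z : ℝ => Real.exp (z + (-a * z ^ 2 + b * z + c)))
        atTop (nhds 0) := by
      apply Real.tendsto_exp_atBot.comp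
      have hb : Tendsto (fun z : ℝ => c + -z) atTop atBot :=
        tendsto_atBot_add_const_left _ c tendsto_neg_atTop_atBot
      apply tendsto_atBot_mono' atTop ?_ hb
      filter_upwards [eventually_ge_atTop ((2 + b) / a), eventually_ge_atTop 1]
        with z hz hz1
      have haz : 2 + b ≤ a * z := by
        rw [div_le_iff₀ ha] at hz; linarith [hz]
      nlinarith [mul_nonneg (sub_nonneg.2 haz) (le_trans zero_le_one hz1)]
    have h3 := h1.mul h2
    rw [mul_zero] at h3
    have e : ∀ z : ℝ, z ^ i * Real.exp (-z) * Real.exp (z + (-a * z ^ 2 + b * z + c))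
        = z ^ i * Real.exp (-a * z ^ 2 + b * z + c) := by
      intro z
      rw [mul_assoc, ← Real.exp_add]
      congr 2
      ring
    exact (funext e : _) ▸ h3
  have hsum : Tendsto (fun z : ℝ => ∑ i ∈ Finset.range (P.natDegree + 1),
      P.coeff i * (z ^ i * Real.exp (-a * z ^ 2 + b * z + c))) atTop (nhds 0) := by
    have h4 : Tendsto (fun z : ℝ => ∑ i ∈ Finset.range (P.natDegree + 1),
        P.coeff i * (z ^ i * Real.exp (-a * z ^ 2 + b * z + c))) atTop
        (nhds (∑ i ∈ Finset.range (P.natDegree + 1), P.coeff i * 0)) :=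
      tendsto_finset_sum _ fun i _ => (hmono i).const_mul _
    simpa using h4
  have e : ∀ z : ℝ, ∑ i ∈ Finset.range (P.natDegree + 1),
        P.coeff i * (z ^ i * Real.exp (-a * z ^ 2 + b * z + c))
      = P.eval z * Real.exp (-a * z ^ 2 + b * z + c) := by
    intro z
    rw [eval_eq_sum_range, Finset.sum_mul]
    exact Finset.sum_congr rfl fun i _ => by ring
  exact (funext e : _) ▸ hsum

lemma tendsto_poly_w_atTop (P : Polynomial ℝ) :
    Tendsto (fun z : ℝ => P.eval z * w z) atTop (nhds 0) := by
  have h := tendsto_poly_gauss_atTop P (by norm_num : (0:ℝ) < 1/2) 0 0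
  simp only [← w_eq] at h
  exact h

lemma tendsto_poly_w_atBot (P : Polynomial ℝ) :
    Tendsto (fun z : ℝ => P.eval z * w z) atBot (nhds 0) := by
  have h := (tendsto_poly_w_atTop (P.comp (-X))).comp tendsto_neg_atBot_atTop
  have e : ∀ z : ℝ, (P.comp (-X)).eval (-z) * w (-z) = P.eval z * w z := by
    intro z
    have : w (-z) = w z := by unfold w; congr 1; ring
    simp [eval_comp, this]
  exact (funext e : _) ▸ h

lemma stein (P : Polynomial ℝ) :
    ∫ z : ℝ, z * P.eval z * w z = ∫ z : ℝ, (derivative P).eval z * w z := by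
  set F : ℝ → ℝ := fun z => -(P.eval z * w z) with hF
  have hderiv : ∀ z : ℝ, HasDerivAt F
      ((z * P.eval z - (derivative P).eval z) * w z) z := by
    intro z
    have h1 : HasDerivAt (fun z : ℝ => -z^2/2) (-z) z := by
      have h := ((hasDerivAt_pow 2 z).neg).div_const 2
      exact h.congr_deriv (by simp; ring)
    have h2 : HasDerivAt w (w z * (-z)) z := h1.exp
    have h3 := ((P.hasDerivAt z).mul h2).neg
    exact h3.congr_deriv (by ring)
  have hInt : Integrable (fun z : ℝ => (z * P.eval z - (derivative P).eval z) * w z) := by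
    have h := integrable_poly_w (X * P - derivative P)
    have e : ∀ z : ℝ, (X * P - derivative P).eval z * w z
        = (z * P.eval z - (derivative P).eval z) * w z := by
      intro z; simp
    exact (funext e : _) ▸ h
  have hFtop : Tendsto F atTop (nhds 0) := by
    simpa using (tendsto_poly_w_atTop P).neg
  have hFbot : Tendsto F atBot (nhds 0) := by
    simpa using (tendsto_poly_w_atBot P).neg
  have hIic : ∫ z in Set.Iic (0:ℝ), (z * P.eval z - (derivative P).eval z) * w z
      = F 0 - 0 :=
    integral_Iic_of_hasDerivAt_of_tendsto (hderiv 0).continuousAt.continuousWithinAt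
      (fun x _ => hderiv x) hInt.integrableOn hFbot
  have hIoi : ∫ z in Set.Ioi (0:ℝ), (z * P.eval z - (derivative P).eval z) * w z
      = 0 - F 0 :=
    integral_Ioi_of_hasDerivAt_of_tendsto (hderiv 0).continuousAt.continuousWithinAt
      (fun x _ => hderiv x) hInt.integrableOn hFtop
  have hsplit := intervalIntegral.integral_Iic_add_Ioi (b := (0:ℝ))
    hInt.integrableOn hInt.integrableOn
  have hzero : ∫ z : ℝ, (z * P.eval z - (derivative P).eval z) * w z = 0 := by
    rw [← hsplit, hIic, hIoi]; ring
  have h1 : Integrable (fun z : ℝ => z * P.eval z * w z) := by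
    have h := integrable_poly_w (X * P)
    have e : ∀ z : ℝ, (X * P).eval z * w z = z * P.eval z * w z := by
      intro z; simp
    exact (funext e : _) ▸ h
  have h2 := integrable_poly_w (derivative P)
  have h5 : ∫ z : ℝ, (z * P.eval z * w z - (derivative P).eval z * w z) = 0 := by
    rw [← hzero]
    congr 1
    funext z
    ring
  rw [integral_sub h1 h2] at h5
  linarith [h5]

lemma gauss_int {a : ℝ} (ha : 0 < a) (b c : ℝ) :
    ∫ z : ℝ, Real.exp (-a * z ^ 2 + b * z + c)
      = Real.sqrt (π / a) * Real.exp (b ^ 2 / (4 * a) + c) := by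
  set d : ℝ := b / (2 * a) with hd
  have key : ∀ z : ℝ, -a * z ^ 2 + b * z + c
      = -a * (z - d) ^ 2 + (b ^ 2 / (4 * a) + c) := by
    intro z; rw [hd]; field_simp; ring
  have e : (fun z : ℝ => Real.exp (-a * z ^ 2 + b * z + c))
      = fun z : ℝ => Real.exp (b ^ 2 / (4 * a) + c) * Real.exp (-a * (z - d) ^ 2) := by
    funext z
    rw [key z, Real.exp_add]
    ring
  rw [e, integral_const_mul]
  have hsub : ∫ z : ℝ, Real.exp (-a * (z - d) ^ 2)
      = ∫ z : ℝ, Real.exp (-a * z ^ 2) :=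
    integral_sub_right_eq_self (fun z => Real.exp (-a * z ^ 2)) d
  rw [hsub, integral_gaussian]
  ring

noncomputable def Iw (P : Polynomial ℝ) : ℝ := ∫ z : ℝ, P.eval z * w z

lemma Iw_add (P Q : Polynomial ℝ) : Iw (P + Q) = Iw P + Iw Q := by
  unfold Iw
  rw [← integral_add (integrable_poly_w P) (integrable_poly_w Q)]
  congr 1; funext z; simp; ring

lemma Iw_sub (P Q : Polynomial ℝ) : Iw (P - Q) = Iw P - Iw Q := by
  unfold Iw
  rw [← integral_sub (integrable_poly_w P) (integrable_poly_w Q)]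
  congr 1; funext z; simp; ring

lemma Iw_Cmul (r : ℝ) (P : Polynomial ℝ) : Iw (C r * P) = r * Iw P := by
  unfold Iw
  rw [← integral_const_mul]
  congr 1; funext z; simp; ring

lemma Iw_stein (P : Polynomial ℝ) : Iw (X * P) = Iw (derivative P) := by
  unfold Iw
  have h := stein P
  rw [← h]
  congr 1; funext z; simp

lemma Iw_one : Iw 1 = Real.sqrt (2 * π) := by
  unfold Iw
  have h := gauss_int (show (0:ℝ) < 1/2 by norm_num) 0 0
  simp only [← w_eq] at h
  simp only [eval_one, one_mul]
  rw [h]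
  norm_num
  ring

lemma Iw_heP (k : ℕ) : Iw (heP k) = if k = 0 then Real.sqrt (2 * π) else 0 := by
  induction k using Nat.strong_induction_on with
  | _ k ih =>
    match k with
    | 0 => simpa [heP_zero] using Iw_one
    | 1 => 
      have : (X : Polynomial ℝ) = X * 1 := by ring
      rw [heP_one, this, Iw_stein]
      simp [Iw]
    | (k + 2) =>
      rw [heP_add_two, Iw_sub, Iw_stein, heP_derivative, Nat.add_sub_cancel,
        Iw_Cmul, Iw_Cmul, ih k (by omega)]
      have hne : ¬ (k + 2 = 0) := by omega
      simp only [hne, if_false]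
      push_cast
      ring

lemma Iw_Cmul_assoc (r : ℝ) (P Q : Polynomial ℝ) :
    Iw (C r * P * Q) = r * Iw (P * Q) := by
  rw [mul_assoc, Iw_Cmul]

lemma Iw_mul_C_mid (r : ℝ) (P Q : Polynomial ℝ) :
    Iw (P * (C r * Q)) = r * Iw (P * Q) := by
  rw [show P * (C r * Q) = C r * (P * Q) by ring, Iw_Cmul]

lemma Iw_heP_mul (n : ℕ) : ∀ k : ℕ, Iw (heP n * heP k)
    = (if n = k then (n.factorial : ℝ) else 0) * Real.sqrt (2 * π) := by
  induction n using Nat.strong_induction_on with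
  | _ n ih =>
    match n with
    | 0 =>
      intro k
      rw [heP_zero, one_mul, Iw_heP]
      rcases Nat.eq_zero_or_pos k with h | h
      · simp [h]
      · have : ¬ (0 = k) := by omega
        simp [this, Nat.pos_iff_ne_zero.mp h]
    | 1 =>
      intro k
      rw [heP_one, Iw_stein, heP_derivative, Iw_Cmul, Iw_heP]
      match k with
      | 0 => simp
      | 1 => simp
      | (j + 2) =>
        have h1 : ¬ (j + 2 - 1 = 0) := by omega
        have h2 : ¬ (1 = j + 2) := by omega
        simp [h1, h2]
    | (n + 2) =>
      intro k
      rw [heP_add_two, sub_mul, Iw_sub, mul_assoc, Iw_stein, derivative_mul,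
        heP_derivative, heP_derivative, Iw_add, Nat.add_sub_cancel,
        Iw_Cmul_assoc, Iw_mul_C_mid, Iw_Cmul_assoc]
      rw [ih n (by omega), ih (n+1) (by omega)]
      by_cases h3 : n + 2 = k
      · have h2 : n + 1 = k - 1 := by omega
        have h1 : ¬ (n = k) := by omega
        rw [if_neg h1, if_pos h2, if_pos h3, ← h3]
        push_cast [Nat.factorial_succ]
        ring
      · have h2 : ¬ (n + 1 = k - 1) := by omega
        rw [if_neg h2, if_neg h3]
        push_cast
        ring

lemma Iw_sum {ι : Type*} (t : Finset ι) (F : ι → Polynomial ℝ) :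
    Iw (∑ i ∈ t, F i) = ∑ i ∈ t, Iw (F i) := by
  unfold Iw
  rw [← integral_finset_sum t (fun i _ => integrable_poly_w (F i))]
  congr 1; funext z
  rw [eval_finset_sum, Finset.sum_mul]

lemma Iw_C (r : ℝ) : Iw (C r) = r * Real.sqrt (2 * π) := by
  rw [show (C r : Polynomial ℝ) = C r * 1 by ring, Iw_Cmul, Iw_one]

lemma Iw_X : Iw X = 0 := by
  have h := Iw_heP 1
  rw [heP_one] at h
  simpa using h

lemma J_eq (s σ x : ℝ) (hσ : σ ^ 2 = 1 - s ^ 2) (n : ℕ) :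
    Iw ((heP n).comp (C (s * x) + C σ * X))
      = s ^ n * He n x * Real.sqrt (2 * π) := by
  induction n using Nat.strong_induction_on with
  | _ n ih =>
    match n with
    | 0 => simp [heP_zero, He, Iw_one]
    | 1 =>
      rw [heP_one, X_comp, Iw_add, Iw_C, Iw_Cmul, Iw_X, He]
      ring
    | (n + 2) =>
      rw [heP_add_two, sub_comp, mul_comp, X_comp, mul_comp, C_comp]
      have hsplit : (C (s * x) + C σ * X) * (heP (n+1)).comp (C (s * x) + C σ * X)
          = C (s * x) * (heP (n+1)).comp (C (s * x) + C σ * X)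
            + C σ * (X * (heP (n+1)).comp (C (s * x) + C σ * X)) := by ring
      rw [hsplit, Iw_sub, Iw_add, Iw_Cmul, Iw_Cmul, Iw_Cmul, Iw_stein,
        derivative_comp, heP_derivative, Nat.add_sub_cancel]
      have hd : derivative (C (s * x) + C σ * X) = C σ := by
        simp
      rw [hd]
      have hre : C σ * ((C (((n+1:ℕ)):ℝ) * heP n).comp (C (s * x) + C σ * X))
          = C (σ * (((n+1:ℕ)):ℝ)) * ((heP n).comp (C (s * x) + C σ * X)) := by
        rw [mul_comp, C_comp, map_mul C σ (((n+1:ℕ)):ℝ)]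
        ring
      rw [hre, Iw_Cmul, ih (n+1) (by omega), ih n (by omega), He]
      push_cast
      linear_combination ((n:ℝ)+1) * s^n * He n x * Real.sqrt (2*π) * hσ

lemma cross_int (σ μ : ℝ) (hσ : 0 < σ) (P : Polynomial ℝ) :
    ∫ z : ℝ, 1/σ * Real.exp (-(z - μ)^2/(2*σ^2)) * P.eval z
      = Iw (P.comp (C μ + C σ * X)) := by
  set g0 : ℝ → ℝ := fun t => 1/σ * Real.exp (-t^2/(2*σ^2)) * P.eval (t + μ) with hg0
  have step1 : ∫ z : ℝ, 1/σ * Real.exp (-(z - μ)^2/(2*σ^2)) * P.eval z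
      = ∫ t : ℝ, g0 t := by
    rw [← integral_sub_right_eq_self g0 μ]
    congr 1; funext z
    rw [hg0]
    simp only [sub_add_cancel]
  have step2 : ∫ t : ℝ, g0 (σ * t) = |σ⁻¹| • ∫ t : ℝ, g0 t :=
    MeasureTheory.Measure.integral_comp_mul_left g0 σ
  have step3 : ∀ t : ℝ, g0 (σ * t) = 1/σ * (((heP 0).eval 0 + 1) - 1) * Real.exp (-t^2/2) * P.eval (μ + σ * t) := by
    intro t
    rw [hg0]
    simp only [heP_zero, eval_one]
    have harg : -(σ * t)^2/(2*σ^2) = -t^2/2 := by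
      field_simp
    rw [harg]
    have : σ * t + μ = μ + σ * t := by ring
    rw [this]
    ring
  have hσne : σ ≠ 0 := ne_of_gt hσ
  have step4 : ∫ t : ℝ, g0 (σ * t) = 1/σ * Iw (P.comp (C μ + C σ * X)) := by
    rw [show (fun t : ℝ => g0 (σ * t)) = fun t : ℝ => 1/σ * ((P.comp (C μ + C σ * X)).eval t * w t) from ?_]
    · rw [integral_const_mul]
      rfl
    · funext t
      rw [step3 t]
      simp only [heP_zero, eval_one, eval_comp, eval_add, eval_C, eval_mul, eval_X, w]
      ring
  rw [step1, ← smul_eq_mul] at *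
  rw [step4] at step2
  rw [abs_of_pos (inv_pos.mpr hσ)] at step2
  have : (σ:ℝ) ≠ 0 := hσne
  simp only [smul_eq_mul, one_div] at step2 ⊢
  exact (mul_left_cancel₀ (inv_ne_zero this) step2).symm

lemma integrable_gauss {a : ℝ} (ha : 0 < a) (b c : ℝ) :
    Integrable (fun z : ℝ => Real.exp (-a * z ^ 2 + b * z + c)) := by
  simpa using integrable_poly_gauss 1 ha b c

lemma mehler (l : ℕ) (x u : ℝ) (hu0 : 0 < u) (hu1 : u < 1) :
    ∑ n ∈ Finset.range (l+1), u ^ n * (He n x) ^ 2 / (n.factorial : ℝ)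
      ≤ Real.exp (u * x ^ 2 / (1 + u)) / Real.sqrt (1 - u ^ 2) := by
  have h1u : (0:ℝ) < 1 - u := by linarith
  have h1u' : (0:ℝ) < 1 + u := by linarith
  set s : ℝ := Real.sqrt u with hs
  set σ : ℝ := Real.sqrt (1 - u) with hσ
  have hs2 : s ^ 2 = u := Real.sq_sqrt hu0.le
  have hσ2 : σ ^ 2 = 1 - u := Real.sq_sqrt h1u.le
  have hσpos : 0 < σ := Real.sqrt_pos.mpr h1u
  have hσ1s : σ ^ 2 = 1 - s ^ 2 := by rw [hσ2, hs2]
  set μ : ℝ := s * x with hμ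
  have hμ2 : μ ^ 2 = u * x ^ 2 := by rw [hμ, mul_pow, hs2]
  set f : ℝ → ℝ := fun z => 1/σ * Real.exp (z^2/2 - (z-μ)^2/(2*σ^2)) with hf
  set c : ℕ → ℝ := fun n => s ^ n * He n x / (n.factorial : ℝ) with hc
  set G : Polynomial ℝ := ∑ n ∈ Finset.range (l+1), C (c n) * heP n with hG
  set S : ℝ := ∑ n ∈ Finset.range (l+1), u ^ n * (He n x) ^ 2 / (n.factorial : ℝ) with hS
  -- pointwise identities
  have hfw : ∀ z : ℝ, f z * w z = 1/σ * Real.exp (-(z-μ)^2/(2*σ^2)) := by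
    intro z
    have harg : (z^2/2 - (z-μ)^2/(2*σ^2)) + (-z^2/2) = -(z-μ)^2/(2*σ^2) := by ring
    rw [hf]
    simp only [w]
    rw [mul_assoc, ← Real.exp_add]
    rw [show -z^2/2 = -(z^2)/2 by ring] at harg ⊢
    rw [harg]
  have hfw2 : ∀ z : ℝ, f z ^ 2 * w z
      = 1/(1-u) * Real.exp (-((1+u)/(2*(1-u))) * z^2 + (2*μ/(1-u)) * z + (-(μ^2)/(1-u))) := by
    intro z
    calc f z ^ 2 * w z
        = (1/σ)^2 * (Real.exp (z^2/2 - (z-μ)^2/(2*σ^2))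
            * Real.exp (z^2/2 - (z-μ)^2/(2*σ^2)) * Real.exp (-z^2/2)) := by
          rw [hf]; simp only [w]; ring_nf
      _ = 1/(1-u) * Real.exp (-((1+u)/(2*(1-u))) * z^2 + (2*μ/(1-u)) * z + (-(μ^2)/(1-u))) := by
          rw [← Real.exp_add, ← Real.exp_add, div_pow, one_pow, hσ2]
          congr 1
          have hne : (1:ℝ) - u ≠ 0 := ne_of_gt h1u
          field_simp
          ring
  -- integral of f^2 against w
  have hapos : (0:ℝ) < (1+u)/(2*(1-u)) := by positivity
  have hA : ∫ z : ℝ, f z ^ 2 * w z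
      = Real.sqrt (2*π) * (Real.exp (u * x^2 / (1+u)) / Real.sqrt (1 - u^2)) := by
    rw [show (fun z : ℝ => f z ^ 2 * w z) = fun z : ℝ =>
        1/(1-u) * Real.exp (-((1+u)/(2*(1-u))) * z^2 + (2*μ/(1-u)) * z + (-(μ^2)/(1-u)))
      from funext hfw2]
    rw [integral_const_mul, gauss_int hapos]
    have hexp : (2*μ/(1-u))^2/(4*((1+u)/(2*(1-u)))) + (-(μ^2)/(1-u)) = u * x^2/(1+u) := by
      rw [← hμ2]
      field_simp
      ring
    rw [hexp]
    have hpre : 1/(1-u) * Real.sqrt (π/((1+u)/(2*(1-u)))) = Real.sqrt (2*π) / Real.sqrt (1-u^2) := by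
      have h1 : 1/(1-u) = Real.sqrt ((1/(1-u))^2) := (Real.sqrt_sq (by positivity)).symm
      rw [h1, ← Real.sqrt_mul (by positivity)]
      rw [← Real.sqrt_div (by positivity)]
      congr 1
      have h2 : (1:ℝ) - u^2 = (1-u)*(1+u) := by ring
      rw [h2]
      field_simp
    rw [← mul_assoc, hpre]
    ring
  -- cross integrals
  have hcross : ∀ P : Polynomial ℝ, ∫ z : ℝ, f z * P.eval z * w z
      = Iw (P.comp (C μ + C σ * X)) := by
    intro P
    rw [← cross_int σ μ hσpos P]
    congr 1; funext z
    calc f z * P.eval z * w z = (f z * w z) * P.eval z := by ring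
      _ = 1/σ * Real.exp (-(z-μ)^2/(2*σ^2)) * P.eval z := by rw [hfw z]
  -- integrability facts
  have hIf2 : Integrable (fun z : ℝ => f z ^ 2 * w z) := by
    rw [show (fun z : ℝ => f z ^ 2 * w z) = fun z : ℝ =>
        1/(1-u) * Real.exp (-((1+u)/(2*(1-u))) * z^2 + (2*μ/(1-u)) * z + (-(μ^2)/(1-u)))
      from funext hfw2]
    exact (integrable_gauss hapos _ _).const_mul _
  have hIfP : ∀ P : Polynomial ℝ, Integrable (fun z : ℝ => f z * P.eval z * w z) := by
    intro P
    have hσ2ne : (σ:ℝ)^2 ≠ 0 := by positivity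
    have e : ∀ z : ℝ, f z * P.eval z * w z
        = 1/σ * (P.eval z * Real.exp (-(1/(2*σ^2)) * z^2 + (μ/σ^2) * z + (-(μ^2)/(2*σ^2)))) := by
      intro z
      rw [show f z * P.eval z * w z = (f z * w z) * P.eval z from by ring, hfw z]
      have harg : -(z-μ)^2/(2*σ^2) = -(1/(2*σ^2)) * z^2 + (μ/σ^2) * z + (-(μ^2)/(2*σ^2)) := by
        field_simp
        ring
      rw [harg]
      ring
    rw [funext e]
    exact (integrable_poly_gauss P (by positivity) _ _).const_mul _
  -- expansion of the square
  have hGw : Integrable (fun z : ℝ => (G * G).eval z * w z) := integrable_poly_w (G * G)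
  have hexpand : ∫ z : ℝ, (f z - G.eval z)^2 * w z
      = (∫ z : ℝ, f z ^ 2 * w z) - 2 * (∫ z : ℝ, f z * G.eval z * w z) + Iw (G * G) := by
    have e : (fun z : ℝ => (f z - G.eval z)^2 * w z)
        = fun z : ℝ => (f z ^ 2 * w z - 2 * (f z * G.eval z * w z)) + (G * G).eval z * w z := by
      funext z
      rw [eval_mul]
      ring
    have hint1 : Integrable (fun z : ℝ => f z ^ 2 * w z - 2 * (f z * G.eval z * w z)) :=
      hIf2.sub ((hIfP G).const_mul 2)
    have hint2 : Integrable (fun z : ℝ => 2 * (f z * G.eval z * w z)) :=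
      (hIfP G).const_mul 2
    rw [e, integral_add hint1 hGw, integral_sub hIf2 hint2, integral_const_mul]
    rfl
  -- value of the cross term
  have hcrossG : ∫ z : ℝ, f z * G.eval z * w z = Real.sqrt (2*π) * S := by
    rw [hcross G, hG, sum_comp, hS]
    have e : ∀ n ∈ Finset.range (l+1), (C (c n) * heP n).comp (C μ + C σ * X)
        = C (c n) * ((heP n).comp (C μ + C σ * X)) := by
      intro n _
      rw [mul_comp, C_comp]
    rw [Finset.sum_congr rfl e, Iw_sum]
    rw [Finset.mul_sum]
    refine Finset.sum_congr rfl fun n _ => ?_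
    rw [Iw_Cmul, hμ, J_eq s σ x hσ1s n, hc]
    have hsn : s ^ n * s ^ n = u ^ n := by rw [← mul_pow, ← sq, hs2]
    calc (s ^ n * He n x / (n.factorial : ℝ)) * (s ^ n * He n x * Real.sqrt (2*π))
        = (s ^ n * s ^ n) * ((He n x)^2 * Real.sqrt (2*π)) / (n.factorial : ℝ) := by ring
      _ = Real.sqrt (2*π) * (u ^ n * (He n x)^2 / (n.factorial : ℝ)) := by rw [hsn]; ring
  -- value of the square term
  have hGG : Iw (G * G) = Real.sqrt (2*π) * S := by
    rw [hG, Finset.sum_mul_sum]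
    rw [Iw_sum]
    have e : ∀ n ∈ Finset.range (l+1), ∀ k ∈ Finset.range (l+1),
        (C (c n) * heP n) * (C (c k) * heP k) = C (c n * c k) * (heP n * heP k) := by
      intro n _ k _
      rw [map_mul C (c n) (c k)]
      ring
    calc ∑ n ∈ Finset.range (l+1), Iw (∑ k ∈ Finset.range (l+1), (C (c n) * heP n) * (C (c k) * heP k))
        = ∑ n ∈ Finset.range (l+1), ∑ k ∈ Finset.range (l+1),
            c n * c k * ((if n = k then (n.factorial : ℝ) else 0) * Real.sqrt (2*π)) := by
          refine Finset.sum_congr rfl fun n hn => ?_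
          rw [Iw_sum]
          refine Finset.sum_congr rfl fun k hk => ?_
          rw [e n hn k hk, Iw_Cmul, Iw_heP_mul]
      _ = Real.sqrt (2*π) * S := by
          rw [hS, Finset.mul_sum]
          refine Finset.sum_congr rfl fun n hn => ?_
          simp only [mul_ite, mul_zero, ite_mul, zero_mul]
          rw [Finset.sum_ite_eq (Finset.range (l+1)) n
            (fun k => c n * c k * ((n.factorial : ℝ) * Real.sqrt (2*π)))]
          have hsn : s ^ n * s ^ n = u ^ n := by rw [← mul_pow, ← sq, hs2]
          have hfne : ((n.factorial : ℝ)) ≠ 0 := by positivity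
          have key : ∀ (A F R : ℝ), F ≠ 0 → (A/F) * (A/F) * (F * R) = R * (A * A / F) := by
            intro A F R hF
            field_simp
          rw [if_pos hn, hc, key _ _ _ hfne]
          congr 1
          rw [show (s ^ n * He n x) * (s ^ n * He n x) = s ^ n * s ^ n * (He n x)^2 from by ring,
            hsn]
  -- Bessel
  have hnonneg : 0 ≤ ∫ z : ℝ, (f z - G.eval z)^2 * w z :=
    integral_nonneg fun z => mul_nonneg (sq_nonneg _) (by unfold w; exact (Real.exp_pos _).le)
  rw [hexpand, hA, hcrossG, hGG] at hnonneg
  have h2pi : (0:ℝ) < Real.sqrt (2*π) := Real.sqrt_pos.mpr (by positivity)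
  have : Real.sqrt (2*π) * S ≤ Real.sqrt (2*π) * (Real.exp (u * x^2/(1+u)) / Real.sqrt (1-u^2)) := by
    linarith [hnonneg]
  exact (mul_le_mul_iff_right₀ h2pi).mp this

/-- pointwise bound on a unit-coefficient degree-`l` harmonic polynomial. -/
theorem stmt9 (m l : ℕ) (hm : 1 ≤ m) (c : (Fin m → ℕ) → ℝ)
    (hc : ∑ a ∈ Finset.Nat.antidiagonalTuple m l, (c a) ^ 2 ≤ 1)
    (y : Fin m → ℝ) (u : ℝ) (hu0 : 0 < u) (hu1 : u < 1) :
    (∑ a ∈ Finset.Nat.antidiagonalTuple m l,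
        c a * (∏ i, He (a i) (y i)) / Real.sqrt (l.factorial : ℝ)) ^ 2
      ≤ (u ^ l)⁻¹ * (1 - u ^ 2) ^ (-(m : ℝ) / 2)
          * Real.exp (u * (∑ i, (y i) ^ 2) / (1 + u)) := by
  have h1u2 : (0:ℝ) < 1 - u ^ 2 := by nlinarith
  set T := Finset.Nat.antidiagonalTuple m l with hT
  set t : (Fin m → ℕ) → ℝ :=
    fun a => (∏ i, He (a i) (y i)) / Real.sqrt (l.factorial : ℝ) with ht
  set F : (Fin m → ℕ) → ℝ :=
    fun a => ∏ i, (u ^ (a i) * (He (a i) (y i)) ^ 2 / (((a i).factorial : ℕ) : ℝ)) with hFdef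
  have hlfac : (0:ℝ) < ((l.factorial : ℕ) : ℝ) := by positivity
  -- Cauchy-Schwarz
  have hCS : (∑ a ∈ T, c a * (∏ i, He (a i) (y i)) / Real.sqrt (l.factorial : ℝ)) ^ 2
      ≤ ∑ a ∈ T, t a ^ 2 := by
    have h1 : (∑ a ∈ T, c a * (∏ i, He (a i) (y i)) / Real.sqrt (l.factorial : ℝ))
        = ∑ a ∈ T, c a * t a := by
      refine Finset.sum_congr rfl fun a _ => ?_
      rw [ht, mul_div_assoc]
    rw [h1]
    have h2 := Finset.sum_mul_sq_le_sq_mul_sq T c t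
    have h3 : (0:ℝ) ≤ ∑ a ∈ T, t a ^ 2 :=
      Finset.sum_nonneg fun a _ => sq_nonneg _
    nlinarith [h2, h3, Finset.sum_nonneg (fun (a : Fin m → ℕ) (_ : a ∈ T) => sq_nonneg (c a))]
  -- per-term bound
  have hul : (0:ℝ) < u ^ l := by positivity
  have hterm : ∀ a ∈ T, t a ^ 2 ≤ (u ^ l)⁻¹ * F a := by
    intro a haT
    have hsum : ∑ i, a i = l := Finset.Nat.mem_antidiagonalTuple.mp haT
    have hD : (∏ i, ((a i).factorial : ℕ)) ∣ l.factorial := by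
      rw [← hsum]
      exact Nat.prod_factorial_dvd_factorial_sum _ _
    have hDle : ((∏ i, ((a i).factorial : ℕ) : ℕ) : ℝ) ≤ ((l.factorial : ℕ) : ℝ) := by
      exact_mod_cast Nat.le_of_dvd l.factorial_pos hD
    have hDpos : (0:ℝ) < ((∏ i, ((a i).factorial : ℕ) : ℕ) : ℝ) := by positivity
    have ht2 : t a ^ 2 = (∏ i, He (a i) (y i)) ^ 2 / ((l.factorial : ℕ) : ℝ) := by
      rw [ht, div_pow, Real.sq_sqrt hlfac.le]
    have hFa : F a = u ^ l * (∏ i, He (a i) (y i)) ^ 2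
        / ((∏ i, ((a i).factorial : ℕ) : ℕ) : ℝ) := by
      simp only [hFdef]
      rw [Finset.prod_div_distrib, Finset.prod_mul_distrib, Finset.prod_pow,
        Finset.prod_pow_eq_pow_sum, hsum]
      push_cast
      ring
    have hinv : (u ^ l)⁻¹ * F a = (∏ i, He (a i) (y i)) ^ 2
        / ((∏ i, ((a i).factorial : ℕ) : ℕ) : ℝ) := by
      rw [hFa]
      field_simp
      try ring
    rw [ht2, hinv]
    gcongr
  -- sum over the antidiagonal vs product of sums
  have hsubset : T ⊆ Fintype.piFinset (fun _ : Fin m => Finset.range (l+1)) := by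
    intro a haT
    rw [Fintype.mem_piFinset]
    intro i
    rw [Finset.mem_range]
    have hsum : ∑ j, a j = l := Finset.Nat.mem_antidiagonalTuple.mp haT
    have hle : a i ≤ l := hsum ▸ Finset.single_le_sum
      (f := a) (fun j _ => Nat.zero_le _) (Finset.mem_univ i)
    omega
  have hFnn : ∀ a : Fin m → ℕ, 0 ≤ F a := fun a =>
    Finset.prod_nonneg fun i _ => by positivity
  have hsum2 : ∑ a ∈ T, F a
      ≤ ∏ i, ∑ n ∈ Finset.range (l+1), u ^ n * (He n (y i)) ^ 2 / ((n.factorial : ℕ) : ℝ) := by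
    rw [Finset.prod_univ_sum]
    exact Finset.sum_le_sum_of_subset_of_nonneg hsubset fun a _ _ => hFnn a
  have hprod : ∏ i, ∑ n ∈ Finset.range (l+1), u ^ n * (He n (y i)) ^ 2 / ((n.factorial : ℕ) : ℝ)
      ≤ ∏ i : Fin m, (Real.exp (u * (y i) ^ 2 / (1+u)) / Real.sqrt (1 - u^2)) :=
    Finset.prod_le_prod
      (fun i _ => Finset.sum_nonneg fun n _ => by positivity)
      (fun i _ => mehler l (y i) u hu0 hu1)
  have hprodeq : ∏ i : Fin m, (Real.exp (u * (y i) ^ 2 / (1+u)) / Real.sqrt (1 - u^2))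
      = Real.exp (u * (∑ i, (y i) ^ 2) / (1+u)) * ((Real.sqrt (1 - u^2)) ^ m)⁻¹ := by
    rw [Finset.prod_div_distrib, ← Real.exp_sum, Finset.prod_const, Finset.card_univ,
      Fintype.card_fin, div_eq_mul_inv]
    congr 2
    rw [← Finset.sum_div, ← Finset.mul_sum]
  have h12 : ((1:ℝ) - u ^ 2) ^ (-(m:ℝ)/2) = ((Real.sqrt (1 - u^2)) ^ m)⁻¹ := by
    rw [Real.sqrt_eq_rpow, ← Real.rpow_natCast ((1 - u^2) ^ ((1:ℝ)/2)) m,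
      ← Real.rpow_mul h1u2.le, ← Real.rpow_neg h1u2.le]
    congr 1
    ring
  -- assemble
  have hchain : ∑ a ∈ T, t a ^ 2
      ≤ (u ^ l)⁻¹ * (Real.exp (u * (∑ i, (y i) ^ 2) / (1+u)) * ((Real.sqrt (1 - u^2)) ^ m)⁻¹) := by
    calc ∑ a ∈ T, t a ^ 2 ≤ ∑ a ∈ T, (u ^ l)⁻¹ * F a := Finset.sum_le_sum hterm
      _ = (u ^ l)⁻¹ * ∑ a ∈ T, F a := by rw [Finset.mul_sum]
      _ ≤ (u ^ l)⁻¹ * (Real.exp (u * (∑ i, (y i) ^ 2) / (1+u))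
            * ((Real.sqrt (1 - u^2)) ^ m)⁻¹) := by
          rw [← hprodeq]
          exact mul_le_mul_of_nonneg_left (hsum2.trans hprod) (inv_nonneg.mpr hul.le)
  calc (∑ a ∈ T, c a * (∏ i, He (a i) (y i)) / Real.sqrt (l.factorial : ℝ)) ^ 2
      ≤ ∑ a ∈ T, t a ^ 2 := hCS
    _ ≤ (u ^ l)⁻¹ * (Real.exp (u * (∑ i, (y i) ^ 2) / (1+u))
          * ((Real.sqrt (1 - u^2)) ^ m)⁻¹) := hchain
    _ = (u ^ l)⁻¹ * (1 - u ^ 2) ^ (-(m : ℝ) / 2)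
          * Real.exp (u * (∑ i, (y i) ^ 2) / (1 + u)) := by
        rw [h12]
        ring
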